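/- Let W_g, W_h : ℓ²(ℤ) → ℓ²(ℤ) ⊗ ℂ² be the single-layer wavelet transforms W_g = (↓ m(conj ĝ_w)) ⊕ (↓ m(conj ĝ_s)) and W_h = (↓ m(conj ĥ_w)) ⊕ (↓ m(conj ĥ_s)) built from an ε-approximate Hilbert pair, i.e. ‖ĥ_s − μ_s ĝ_s‖_∞ ≤ ε (which implies ‖ĥ_w − μ_w ĝ_w‖_∞ ≤ ε). Define W̃_h = (↓ m(μ_w conj ĥ_w)) ⊕ (↓ m(μ_s conj ĥ_s)). Then W_h ∘ m(μ_w) = (1 ⊕ m(μ_w)) ∘ W̃_h and ‖W_g − W̃_h‖ ≤ ε. -/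

import Mathlib

set_option maxHeartbeats 1600000


open Complex Real MeasureTheory

/-! ### Auxiliary lemmas about the half-angle exponential `Ee t = exp (I t / 2)` -/

noncomputable def Ee (t : ℝ) : ℂ := Complex.exp (Complex.I * t / 2)

lemma Ee_add (a b c : ℝ) (h : a + b = c) : Ee c = Ee a * Ee b := by
  rw [← h]; simp only [Ee]; rw [← Complex.exp_add]; congr 1; push_cast; ring

lemma Ee_inv (a : ℝ) : Ee a * Ee (-a) = 1 := by
  simp only [Ee]; rw [← Complex.exp_add, ← Complex.exp_zero]; congr 1; push_cast; ring

lemma Ee_conj (a : ℝ) : (starRingEnd ℂ) (Ee a) = Ee (-a) := by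
  simp only [Ee]; rw [← Complex.exp_conj]; congr 1
  rw [map_div₀, map_mul, Complex.conj_I, Complex.conj_ofReal, map_ofNat]; push_cast; ring

lemma Ee_pi : Ee π = Complex.I := by
  simp only [Ee]
  rw [show Complex.I * (π : ℝ) / 2 = ((π / 2 : ℝ) : ℂ) * Complex.I by push_cast; ring,
    Complex.exp_mul_I]
  simp [← Complex.ofReal_cos, ← Complex.ofReal_sin, Real.cos_pi_div_two, Real.sin_pi_div_two]

lemma Ee_neg_pi : Ee (-π) = -Complex.I := by
  simp only [Ee]
  rw [show Complex.I * ((-π : ℝ) : ℂ) / 2 = ((-(π / 2) : ℝ) : ℂ) * Complex.I by push_cast; ring,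
    Complex.exp_mul_I]
  simp [← Complex.ofReal_cos, ← Complex.ofReal_sin, Real.cos_pi_div_two, Real.sin_pi_div_two]

lemma Ee_two_pi : Ee (2 * π) = -1 := by
  simp only [Ee]
  rw [show Complex.I * ((2 * π : ℝ) : ℂ) / 2 = ((π : ℝ) : ℂ) * Complex.I by push_cast; ring]
  exact Complex.exp_pi_mul_I

lemma Ee_neg_two_pi : Ee (-(2 * π)) = -1 := by
  simp only [Ee]
  rw [show Complex.I * ((-(2 * π) : ℝ) : ℂ) / 2 = ((-π : ℝ) : ℂ) * Complex.I by push_cast; ring,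
    Complex.exp_mul_I]
  simp [← Complex.ofReal_cos, ← Complex.ofReal_sin]

/-- Key phase identities for the Hilbert-pair phases, valid off the lattice `π ℤ`. -/
lemma muKey (μs μw : ℝ → ℂ)
    (hμsper : Function.Periodic μs (2 * π)) (hμwper : Function.Periodic μw (2 * π))
    (hμs : ∀ θ : ℝ, |θ| < π → μs θ = Complex.exp (-(Complex.I * θ / 2)))
    (hμw : ∀ θ : ℝ, |θ| < π →
      μw θ = -Complex.I * (Real.sign θ : ℝ) * Complex.exp (Complex.I * θ / 2))
    (θ : ℝ) (hθ : ∀ k : ℤ, θ ≠ (k : ℝ) * π) :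
    μw θ = (starRingEnd ℂ) (μs (θ + π)) ∧
    μw θ * μs (θ / 2) = μw (θ / 2) ∧
    μw θ * μs (θ / 2 + π) = μw (θ / 2 + π) ∧
    μs θ * (starRingEnd ℂ) (μs θ) = 1 := by
  have hπ := Real.pi_pos
  have hs' : ∀ x : ℝ, -π < x → x < π → μs x = Ee (-x) := by
    intro x h1 h2
    rw [hμs x (abs_lt.2 ⟨h1, h2⟩)]; simp only [Ee]; congr 1; push_cast; ring
  have hwpos : ∀ x : ℝ, 0 < x → x < π → μw x = -Complex.I * Ee x := by
    intro x h1 h2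
    rw [hμw x (abs_lt.2 ⟨by linarith, h2⟩), Real.sign_of_pos h1]; simp only [Ee]; push_cast; ring
  have hwneg : ∀ x : ℝ, -π < x → x < 0 → μw x = Complex.I * Ee x := by
    intro x h1 h2
    rw [hμw x (abs_lt.2 ⟨h1, by linarith⟩), Real.sign_of_neg h2]; simp only [Ee]; push_cast; ring
  obtain ⟨n, hm1, hm2, hne1, hne2, hne3⟩ :
      ∃ n : ℤ, -(2 * π) < θ - n * (4 * π) ∧ θ - n * (4 * π) < 2 * π ∧
        θ - n * (4 * π) ≠ -π ∧ θ - n * (4 * π) ≠ 0 ∧ θ - n * (4 * π) ≠ π := by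
    set n := ⌊(θ + 2 * π) / (4 * π)⌋ with hn
    have h4 : (0 : ℝ) < 4 * π := by linarith
    have hfl : ((n : ℝ)) ≤ (θ + 2 * π) / (4 * π) := Int.floor_le _
    have hfu : (θ + 2 * π) / (4 * π) < (n : ℝ) + 1 := by
      have := Int.lt_floor_add_one ((θ + 2 * π) / (4 * π)); push_cast at this ⊢; linarith
    have hl : (n : ℝ) * (4 * π) ≤ θ + 2 * π := (le_div_iff₀ h4).1 hfl
    have hu : θ + 2 * π < ((n : ℝ) + 1) * (4 * π) := (div_lt_iff₀ h4).1 hfu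
    refine ⟨n, ?_, by nlinarith, ?_, ?_, ?_⟩
    · rcases eq_or_lt_of_le (by linarith : -(2 * π) ≤ θ - n * (4 * π)) with heq | h
      · exact absurd (by push_cast; linarith : θ = ((4 * n - 2 : ℤ) : ℝ) * π) (hθ _)
      · exact h
    · intro h; exact hθ (4 * n - 1) (by push_cast; linarith)
    · intro h; exact hθ (4 * n) (by push_cast; linarith)
    · intro h; exact hθ (4 * n + 1) (by push_cast; linarith)
  set σ := θ - n * (4 * π) with hσ
  have htrans : ∀ (f : ℝ → ℂ), Function.Periodic f (2 * π) → ∀ (x y : ℝ) (m : ℤ),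
      x - m * (2 * π) = y → f x = f y := by
    intro f hf x y m h
    rw [← h]; exact (hf.sub_int_mul_eq m).symm
  have hinv := Ee_inv (σ / 2)
  have hEσ : Ee σ = Ee (σ / 2) * Ee (σ / 2) := Ee_add _ _ _ (by ring)
  have hEσ' : Ee (-σ) = Ee (-(σ / 2)) * Ee (-(σ / 2)) := Ee_add _ _ _ (by ring)
  rcases lt_or_gt_of_ne hne2 with hneg | hpos
  · -- σ < 0
    rcases lt_or_gt_of_ne hne1 with hlt | hgt
    · -- σ ∈ (-2π, -π)
      have e1 : μw θ = Complex.I * (Ee (σ / 2) * Ee (σ / 2)) := by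
        rw [htrans μw hμwper θ (σ + 2 * π) (2 * n - 1) (by rw [hσ]; push_cast; ring),
          hwpos (σ + 2 * π) (by linarith) (by linarith),
          show Ee (σ + 2 * π) = Ee σ * Ee (2 * π) from Ee_add _ _ _ (by ring), Ee_two_pi, hEσ]
        ring
      have e2 : μs (θ / 2) = Ee (-(σ / 2)) := by
        rw [htrans μs hμsper (θ / 2) (σ / 2) n (by rw [hσ]; push_cast; ring),
          hs' (σ / 2) (by linarith) (by linarith)]
      have e3 : μw (θ / 2) = Complex.I * Ee (σ / 2) := by
        rw [htrans μw hμwper (θ / 2) (σ / 2) n (by rw [hσ]; push_cast; ring),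
          hwneg (σ / 2) (by linarith) (by linarith)]
      have e4 : μs (θ / 2 + π) = -Complex.I * Ee (-(σ / 2)) := by
        rw [htrans μs hμsper (θ / 2 + π) (σ / 2 + π) n (by rw [hσ]; push_cast; ring),
          hs' (σ / 2 + π) (by linarith) (by linarith),
          show Ee (-(σ / 2 + π)) = Ee (-(σ / 2)) * Ee (-π) from Ee_add _ _ _ (by ring), Ee_neg_pi]
        ring
      have e5 : μw (θ / 2 + π) = Ee (σ / 2) := by
        rw [htrans μw hμwper (θ / 2 + π) (σ / 2 + π) n (by rw [hσ]; push_cast; ring),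
          hwpos (σ / 2 + π) (by linarith) (by linarith),
          show Ee (σ / 2 + π) = Ee (σ / 2) * Ee π from Ee_add _ _ _ (by ring), Ee_pi]
        linear_combination (-(Ee (σ / 2))) * Complex.I_mul_I
      have e6 : μs (θ + π) = -Complex.I * (Ee (-(σ / 2)) * Ee (-(σ / 2))) := by
        rw [htrans μs hμsper (θ + π) (σ + π) (2 * n) (by rw [hσ]; push_cast; ring),
          hs' (σ + π) (by linarith) (by linarith),
          show Ee (-(σ + π)) = Ee (-σ) * Ee (-π) from Ee_add _ _ _ (by ring), Ee_neg_pi, hEσ']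
        ring
      have e7 : μs θ = -(Ee (-(σ / 2)) * Ee (-(σ / 2))) := by
        rw [htrans μs hμsper θ (σ + 2 * π) (2 * n - 1) (by rw [hσ]; push_cast; ring),
          hs' (σ + 2 * π) (by linarith) (by linarith),
          show Ee (-(σ + 2 * π)) = Ee (-σ) * Ee (-(2 * π)) from Ee_add _ _ _ (by ring),
          Ee_neg_two_pi, hEσ']
        ring
      refine ⟨?_, ?_, ?_, ?_⟩
      · rw [e1, e6]; simp only [map_mul, map_neg, Complex.conj_I, Ee_conj, neg_neg]
      · rw [e1, e2, e3]; linear_combination (Complex.I * Ee (σ / 2)) * hinv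
      · rw [e1, e4, e5]
        linear_combination (Ee (σ / 2)) * hinv + (-(Ee (σ / 2) * Ee (σ / 2) * Ee (-(σ / 2)))) * Complex.I_mul_I
      · rw [e7]; simp only [map_mul, map_neg, Ee_conj, neg_neg]
        linear_combination (Ee (σ / 2) * Ee (-(σ / 2)) + 1) * hinv
    · -- σ ∈ (-π, 0)
      have e1 : μw θ = Complex.I * (Ee (σ / 2) * Ee (σ / 2)) := by
        rw [htrans μw hμwper θ σ (2 * n) (by rw [hσ]; push_cast; ring),
          hwneg σ (by linarith) (by linarith), hEσ]
      have e2 : μs (θ / 2) = Ee (-(σ / 2)) := by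
        rw [htrans μs hμsper (θ / 2) (σ / 2) n (by rw [hσ]; push_cast; ring),
          hs' (σ / 2) (by linarith) (by linarith)]
      have e3 : μw (θ / 2) = Complex.I * Ee (σ / 2) := by
        rw [htrans μw hμwper (θ / 2) (σ / 2) n (by rw [hσ]; push_cast; ring),
          hwneg (σ / 2) (by linarith) (by linarith)]
      have e4 : μs (θ / 2 + π) = -Complex.I * Ee (-(σ / 2)) := by
        rw [htrans μs hμsper (θ / 2 + π) (σ / 2 + π) n (by rw [hσ]; push_cast; ring),
          hs' (σ / 2 + π) (by linarith) (by linarith),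
          show Ee (-(σ / 2 + π)) = Ee (-(σ / 2)) * Ee (-π) from Ee_add _ _ _ (by ring), Ee_neg_pi]
        ring
      have e5 : μw (θ / 2 + π) = Ee (σ / 2) := by
        rw [htrans μw hμwper (θ / 2 + π) (σ / 2 + π) n (by rw [hσ]; push_cast; ring),
          hwpos (σ / 2 + π) (by linarith) (by linarith),
          show Ee (σ / 2 + π) = Ee (σ / 2) * Ee π from Ee_add _ _ _ (by ring), Ee_pi]
        linear_combination (-(Ee (σ / 2))) * Complex.I_mul_I
      have e6 : μs (θ + π) = -Complex.I * (Ee (-(σ / 2)) * Ee (-(σ / 2))) := by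
        rw [htrans μs hμsper (θ + π) (σ + π) (2 * n) (by rw [hσ]; push_cast; ring),
          hs' (σ + π) (by linarith) (by linarith),
          show Ee (-(σ + π)) = Ee (-σ) * Ee (-π) from Ee_add _ _ _ (by ring), Ee_neg_pi, hEσ']
        ring
      have e7 : μs θ = Ee (-(σ / 2)) * Ee (-(σ / 2)) := by
        rw [htrans μs hμsper θ σ (2 * n) (by rw [hσ]; push_cast; ring),
          hs' σ (by linarith) (by linarith), hEσ']
      refine ⟨?_, ?_, ?_, ?_⟩
      · rw [e1, e6]; simp only [map_mul, map_neg, Complex.conj_I, Ee_conj, neg_neg]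
      · rw [e1, e2, e3]; linear_combination (Complex.I * Ee (σ / 2)) * hinv
      · rw [e1, e4, e5]
        linear_combination (Ee (σ / 2)) * hinv + (-(Ee (σ / 2) * Ee (σ / 2) * Ee (-(σ / 2)))) * Complex.I_mul_I
      · rw [e7]; simp only [map_mul, Ee_conj, neg_neg]
        linear_combination (Ee (σ / 2) * Ee (-(σ / 2)) + 1) * hinv
  · -- σ > 0
    rcases lt_or_gt_of_ne hne3 with hlt | hgt
    · -- σ ∈ (0, π)
      have e1 : μw θ = -Complex.I * (Ee (σ / 2) * Ee (σ / 2)) := by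
        rw [htrans μw hμwper θ σ (2 * n) (by rw [hσ]; push_cast; ring),
          hwpos σ (by linarith) (by linarith), hEσ]
      have e2 : μs (θ / 2) = Ee (-(σ / 2)) := by
        rw [htrans μs hμsper (θ / 2) (σ / 2) n (by rw [hσ]; push_cast; ring),
          hs' (σ / 2) (by linarith) (by linarith)]
      have e3 : μw (θ / 2) = -Complex.I * Ee (σ / 2) := by
        rw [htrans μw hμwper (θ / 2) (σ / 2) n (by rw [hσ]; push_cast; ring),
          hwpos (σ / 2) (by linarith) (by linarith)]
      have e4 : μs (θ / 2 + π) = Complex.I * Ee (-(σ / 2)) := by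
        rw [htrans μs hμsper (θ / 2 + π) (σ / 2 - π) (n + 1) (by rw [hσ]; push_cast; ring),
          hs' (σ / 2 - π) (by linarith) (by linarith),
          show Ee (-(σ / 2 - π)) = Ee (-(σ / 2)) * Ee π from Ee_add _ _ _ (by ring), Ee_pi]
        ring
      have e5 : μw (θ / 2 + π) = Ee (σ / 2) := by
        rw [htrans μw hμwper (θ / 2 + π) (σ / 2 - π) (n + 1) (by rw [hσ]; push_cast; ring),
          hwneg (σ / 2 - π) (by linarith) (by linarith),
          show Ee (σ / 2 - π) = Ee (σ / 2) * Ee (-π) from Ee_add _ _ _ (by ring), Ee_neg_pi]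
        linear_combination (-(Ee (σ / 2))) * Complex.I_mul_I
      have e6 : μs (θ + π) = Complex.I * (Ee (-(σ / 2)) * Ee (-(σ / 2))) := by
        rw [htrans μs hμsper (θ + π) (σ - π) (2 * n + 1) (by rw [hσ]; push_cast; ring),
          hs' (σ - π) (by linarith) (by linarith),
          show Ee (-(σ - π)) = Ee (-σ) * Ee π from Ee_add _ _ _ (by ring), Ee_pi, hEσ']
        ring
      have e7 : μs θ = Ee (-(σ / 2)) * Ee (-(σ / 2)) := by
        rw [htrans μs hμsper θ σ (2 * n) (by rw [hσ]; push_cast; ring),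
          hs' σ (by linarith) (by linarith), hEσ']
      refine ⟨?_, ?_, ?_, ?_⟩
      · rw [e1, e6]; simp only [map_mul, Complex.conj_I, Ee_conj, neg_neg]
      · rw [e1, e2, e3]; linear_combination (-Complex.I * Ee (σ / 2)) * hinv
      · rw [e1, e4, e5]
        linear_combination (Ee (σ / 2)) * hinv + (-(Ee (σ / 2) * Ee (σ / 2) * Ee (-(σ / 2)))) * Complex.I_mul_I
      · rw [e7]; simp only [map_mul, Ee_conj, neg_neg]
        linear_combination (Ee (σ / 2) * Ee (-(σ / 2)) + 1) * hinv
    · -- σ ∈ (π, 2π)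
      have e1 : μw θ = -Complex.I * (Ee (σ / 2) * Ee (σ / 2)) := by
        rw [htrans μw hμwper θ (σ - 2 * π) (2 * n + 1) (by rw [hσ]; push_cast; ring),
          hwneg (σ - 2 * π) (by linarith) (by linarith),
          show Ee (σ - 2 * π) = Ee σ * Ee (-(2 * π)) from Ee_add _ _ _ (by ring),
          Ee_neg_two_pi, hEσ]
        ring
      have e2 : μs (θ / 2) = Ee (-(σ / 2)) := by
        rw [htrans μs hμsper (θ / 2) (σ / 2) n (by rw [hσ]; push_cast; ring),
          hs' (σ / 2) (by linarith) (by linarith)]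
      have e3 : μw (θ / 2) = -Complex.I * Ee (σ / 2) := by
        rw [htrans μw hμwper (θ / 2) (σ / 2) n (by rw [hσ]; push_cast; ring),
          hwpos (σ / 2) (by linarith) (by linarith)]
      have e4 : μs (θ / 2 + π) = Complex.I * Ee (-(σ / 2)) := by
        rw [htrans μs hμsper (θ / 2 + π) (σ / 2 - π) (n + 1) (by rw [hσ]; push_cast; ring),
          hs' (σ / 2 - π) (by linarith) (by linarith),
          show Ee (-(σ / 2 - π)) = Ee (-(σ / 2)) * Ee π from Ee_add _ _ _ (by ring), Ee_pi]
        ring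
      have e5 : μw (θ / 2 + π) = Ee (σ / 2) := by
        rw [htrans μw hμwper (θ / 2 + π) (σ / 2 - π) (n + 1) (by rw [hσ]; push_cast; ring),
          hwneg (σ / 2 - π) (by linarith) (by linarith),
          show Ee (σ / 2 - π) = Ee (σ / 2) * Ee (-π) from Ee_add _ _ _ (by ring), Ee_neg_pi]
        linear_combination (-(Ee (σ / 2))) * Complex.I_mul_I
      have e6 : μs (θ + π) = Complex.I * (Ee (-(σ / 2)) * Ee (-(σ / 2))) := by
        rw [htrans μs hμsper (θ + π) (σ - π) (2 * n + 1) (by rw [hσ]; push_cast; ring),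
          hs' (σ - π) (by linarith) (by linarith),
          show Ee (-(σ - π)) = Ee (-σ) * Ee π from Ee_add _ _ _ (by ring), Ee_pi, hEσ']
        ring
      have e7 : μs θ = -(Ee (-(σ / 2)) * Ee (-(σ / 2))) := by
        rw [htrans μs hμsper θ (σ - 2 * π) (2 * n + 1) (by rw [hσ]; push_cast; ring),
          hs' (σ - 2 * π) (by linarith) (by linarith),
          show Ee (-(σ - 2 * π)) = Ee (-σ) * Ee (2 * π) from Ee_add _ _ _ (by ring),
          Ee_two_pi, hEσ']
        ring
      refine ⟨?_, ?_, ?_, ?_⟩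
      · rw [e1, e6]; simp only [map_mul, Complex.conj_I, Ee_conj, neg_neg]
      · rw [e1, e2, e3]; linear_combination (-Complex.I * Ee (σ / 2)) * hinv
      · rw [e1, e4, e5]
        linear_combination (Ee (σ / 2)) * hinv + (-(Ee (σ / 2) * Ee (σ / 2) * Ee (-(σ / 2)))) * Complex.I_mul_I
      · rw [e7]; simp only [map_mul, map_neg, Ee_conj, neg_neg]
        linear_combination (Ee (σ / 2) * Ee (-(σ / 2)) + 1) * hinv

/-- Single-layer filter-error lemma for an ε-approximate Hilbert pair, expressed on the
Fourier side.  With quadrature-mirror filters `gs, gw` and `hs, hw` (the wavelet filters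
given by the conjugate mirror relation), phases `μs(θ) = e^{−iθ/2}`,
`μw(θ) = −i sgn(θ)e^{iθ/2}`, and `‖ĥ_s − μ_s ĝ_s‖_∞ ≤ ε`, one has:
(a) the implied wavelet-filter bound `‖ĥ_w − μ_w ĝ_w‖_∞ ≤ ε` (a.e.);
(b) the operator identity `W_h ∘ m(μ_w) = (1 ⊕ m(μ_w)) ∘ W̃_h`, componentwise a.e. on the
Fourier side, where `W̃_h = (↓ m(μ_w conj ĥ_w)) ⊕ (↓ m(μ_s conj ĥ_s))` and
`(↓f)^(θ) = ½(f̂(θ/2) + f̂(θ/2+π))`;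
(c) the norm bound `‖W_g − W̃_h‖ ≤ ε`, i.e. `‖(W_g − W̃_h)f‖² ≤ ε²‖f‖²` for every `f ∈ ℓ²(ℤ)`,
written via Plancherel as an integral inequality over one period. -/
theorem approximate_hilbert_pair_one_layer
    (ε : ℝ) (hε : 0 ≤ ε)
    (gs gw hs hw μs μw : ℝ → ℂ)
    (hgsper : Function.Periodic gs (2 * π)) (hhsper : Function.Periodic hs (2 * π))
    (hμsper : Function.Periodic μs (2 * π)) (hμwper : Function.Periodic μw (2 * π))
    (hμs : ∀ θ : ℝ, |θ| < π → μs θ = Complex.exp (-(Complex.I * θ / 2)))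
    (hμw : ∀ θ : ℝ, |θ| < π →
      μw θ = -Complex.I * (Real.sign θ : ℝ) * Complex.exp (Complex.I * θ / 2))
    (hQMFg : ∀ θ : ℝ, ‖gs θ‖ ^ 2 + ‖gs (θ + π)‖ ^ 2 = 2)
    (hQMFh : ∀ θ : ℝ, ‖hs θ‖ ^ 2 + ‖hs (θ + π)‖ ^ 2 = 2)
    (hmirror_g : ∀ θ : ℝ, gw θ = Complex.exp (-(Complex.I * θ)) * (starRingEnd ℂ) (gs (θ + π)))
    (hmirror_h : ∀ θ : ℝ, hw θ = Complex.exp (-(Complex.I * θ)) * (starRingEnd ℂ) (hs (θ + π)))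
    (hHilb : ∀ θ : ℝ, ‖hs θ - μs θ * gs θ‖ ≤ ε) :
    -- (a) implied wavelet-filter bound
    (∀ᵐ θ : ℝ ∂(volume : Measure ℝ), ‖hw θ - μw θ * gw θ‖ ≤ ε) ∧
    -- (b) the identity W_h ∘ m(μ_w) = (1 ⊕ m(μ_w)) ∘ W̃_h  (wavelet and scaling components)
    (∀ F : ℝ → ℂ, ∀ᵐ θ : ℝ ∂(volume : Measure ℝ),
      ((1 / 2 : ℂ) * ((starRingEnd ℂ) (hw (θ / 2)) * (μw (θ / 2) * F (θ / 2))
          + (starRingEnd ℂ) (hw (θ / 2 + π)) * (μw (θ / 2 + π) * F (θ / 2 + π)))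
        = (1 / 2 : ℂ) * ((μw (θ / 2) * (starRingEnd ℂ) (hw (θ / 2))) * F (θ / 2)
          + (μw (θ / 2 + π) * (starRingEnd ℂ) (hw (θ / 2 + π))) * F (θ / 2 + π))) ∧
      ((1 / 2 : ℂ) * ((starRingEnd ℂ) (hs (θ / 2)) * (μw (θ / 2) * F (θ / 2))
          + (starRingEnd ℂ) (hs (θ / 2 + π)) * (μw (θ / 2 + π) * F (θ / 2 + π)))
        = μw θ * ((1 / 2 : ℂ) * ((μs (θ / 2) * (starRingEnd ℂ) (hs (θ / 2))) * F (θ / 2)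
          + (μs (θ / 2 + π) * (starRingEnd ℂ) (hs (θ / 2 + π))) * F (θ / 2 + π))))) ∧
    -- (c) the norm bound ‖W_g − W̃_h‖ ≤ ε
    (∀ F : ℝ → ℂ, Measurable F → Function.Periodic F (2 * π) →
      IntervalIntegrable (fun θ : ℝ => ‖F θ‖ ^ 2) (volume : Measure ℝ) 0 (2 * π) →
      (∫ θ in (0 : ℝ)..(2 * π),
        (‖(1 / 2 : ℂ) * (((starRingEnd ℂ) (gw (θ / 2)) - μw (θ / 2) * (starRingEnd ℂ) (hw (θ / 2))) * F (θ / 2)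
            + ((starRingEnd ℂ) (gw (θ / 2 + π)) - μw (θ / 2 + π) * (starRingEnd ℂ) (hw (θ / 2 + π))) * F (θ / 2 + π))‖ ^ 2
          + ‖(1 / 2 : ℂ) * (((starRingEnd ℂ) (gs (θ / 2)) - μs (θ / 2) * (starRingEnd ℂ) (hs (θ / 2))) * F (θ / 2)
            + ((starRingEnd ℂ) (gs (θ / 2 + π)) - μs (θ / 2 + π) * (starRingEnd ℂ) (hs (θ / 2 + π))) * F (θ / 2 + π))‖ ^ 2))
        ≤ ε ^ 2 * ∫ θ in (0 : ℝ)..(2 * π), ‖F θ‖ ^ 2) := by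
  have hπ := Real.pi_pos
  have key := fun (θ : ℝ) (hθ : ∀ k : ℤ, θ ≠ (k : ℝ) * π) =>
    muKey μs μw hμsper hμwper hμs hμw θ hθ
  have hnull : ∀ᵐ θ : ℝ ∂(volume : Measure ℝ), ∀ k : ℤ, θ ≠ (k : ℝ) * π := by
    have hcount : Set.Countable (Set.range fun k : ℤ => (k : ℝ) * π) := Set.countable_range _
    have h0 : (volume : Measure ℝ) (Set.range fun k : ℤ => (k : ℝ) * π) = 0 :=
      hcount.measure_zero _
    rw [ae_iff]
    refine measure_mono_null ?_ h0
    intro x hx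
    simp only [Set.mem_setOf_eq, not_forall, ne_eq, not_not] at hx
    obtain ⟨k, hk⟩ := hx
    exact ⟨k, hk.symm⟩
  have hce : ∀ x : ℝ, (starRingEnd ℂ) (Complex.exp (-(Complex.I * x)))
      = Complex.exp (Complex.I * x) := by
    intro x
    rw [← Complex.exp_conj]; congr 1
    rw [map_neg, map_mul, Complex.conj_I, Complex.conj_ofReal]; ring
  refine ⟨?_, ?_, ?_⟩
  · -- part (a)
    filter_upwards [hnull] with θ hθ
    obtain ⟨h2, -, -, -⟩ := key θ hθ
    have hrw : hw θ - μw θ * gw θ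
        = Complex.exp (-(Complex.I * θ)) *
          (starRingEnd ℂ) (hs (θ + π) - μs (θ + π) * gs (θ + π)) := by
      rw [hmirror_h, hmirror_g, h2, map_sub, map_mul]; ring
    have h1 : ‖Complex.exp (-(Complex.I * (θ : ℂ)))‖ = 1 := by
      rw [Complex.norm_exp]; simp
    rw [hrw, norm_mul, h1, one_mul, RCLike.norm_conj]
    exact hHilb _
  · -- part (b)
    intro F
    filter_upwards [hnull] with θ hθ
    obtain ⟨-, h3a, h3b, -⟩ := key θ hθ
    refine ⟨by ring, ?_⟩
    rw [← h3a, ← h3b]; ring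
  · -- part (c)
    intro F hFmeas hFper hFint
    -- pointwise a.e. bound
    have hpt : ∀ θ : ℝ, (∀ k : ℤ, θ ≠ (k : ℝ) * π) →
        (‖(1 / 2 : ℂ) * (((starRingEnd ℂ) (gw (θ / 2)) - μw (θ / 2) * (starRingEnd ℂ) (hw (θ / 2))) * F (θ / 2)
            + ((starRingEnd ℂ) (gw (θ / 2 + π)) - μw (θ / 2 + π) * (starRingEnd ℂ) (hw (θ / 2 + π))) * F (θ / 2 + π))‖ ^ 2
          + ‖(1 / 2 : ℂ) * (((starRingEnd ℂ) (gs (θ / 2)) - μs (θ / 2) * (starRingEnd ℂ) (hs (θ / 2))) * F (θ / 2)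
            + ((starRingEnd ℂ) (gs (θ / 2 + π)) - μs (θ / 2 + π) * (starRingEnd ℂ) (hs (θ / 2 + π))) * F (θ / 2 + π))‖ ^ 2)
        ≤ ε ^ 2 / 2 * (‖F (θ / 2)‖ ^ 2 + ‖F (θ / 2 + π)‖ ^ 2) := by
      intro θ hθ
      have hφ : ∀ k : ℤ, θ / 2 ≠ (k : ℝ) * π := by
        intro k hk; exact hθ (2 * k) (by push_cast; linarith)
      have hφπ : ∀ k : ℤ, θ / 2 + π ≠ (k : ℝ) * π := by
        intro k hk; exact hφ (k - 1) (by push_cast; linarith)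
      obtain ⟨hm1, -, -, hc1⟩ := key (θ / 2) hφ
      obtain ⟨hm2', -, -, hc2⟩ := key (θ / 2 + π) hφπ
      have hm2 : μw (θ / 2 + π) = (starRingEnd ℂ) (μs (θ / 2)) := by
        rw [hm2', show θ / 2 + π + π = θ / 2 + 2 * π by ring, hμsper (θ / 2)]
      have hexp_pi : Complex.exp (Complex.I * ((π : ℝ) : ℂ)) = -1 := by
        rw [mul_comm]; exact Complex.exp_pi_mul_I
      have hexp2 : Complex.exp (Complex.I * ((θ / 2 + π : ℝ) : ℂ))
          = -Complex.exp (Complex.I * ((θ / 2 : ℝ) : ℂ)) := by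
        push_cast
        rw [mul_add, Complex.exp_add,
          show Complex.I * ((π : ℝ) : ℂ) = Complex.I * ((π : ℝ) : ℂ) from rfl, hexp_pi]
        ring
      have hgw1 : (starRingEnd ℂ) (gw (θ / 2))
          = Complex.exp (Complex.I * ((θ / 2 : ℝ) : ℂ)) * gs (θ / 2 + π) := by
        rw [hmirror_g, map_mul, Complex.conj_conj, hce]
      have hhw1 : (starRingEnd ℂ) (hw (θ / 2))
          = Complex.exp (Complex.I * ((θ / 2 : ℝ) : ℂ)) * hs (θ / 2 + π) := by
        rw [hmirror_h, map_mul, Complex.conj_conj, hce]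
      have hgw2 : (starRingEnd ℂ) (gw (θ / 2 + π))
          = -Complex.exp (Complex.I * ((θ / 2 : ℝ) : ℂ)) * gs (θ / 2) := by
        rw [hmirror_g, map_mul, Complex.conj_conj, hce,
          show θ / 2 + π + π = θ / 2 + 2 * π by ring, hgsper (θ / 2), hexp2]
      have hhw2 : (starRingEnd ℂ) (hw (θ / 2 + π))
          = -Complex.exp (Complex.I * ((θ / 2 : ℝ) : ℂ)) * hs (θ / 2) := by
        rw [hmirror_h, map_mul, Complex.conj_conj, hce,
          show θ / 2 + π + π = θ / 2 + 2 * π by ring, hhsper (θ / 2), hexp2]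
      have he1 : Complex.exp (Complex.I * ((θ / 2 : ℝ) : ℂ))
          * (starRingEnd ℂ) (Complex.exp (Complex.I * ((θ / 2 : ℝ) : ℂ))) = 1 := by
        rw [← Complex.exp_conj, map_mul, Complex.conj_I, Complex.conj_ofReal,
          ← Complex.exp_add,
          show Complex.I * ((θ / 2 : ℝ) : ℂ) + -Complex.I * ((θ / 2 : ℝ) : ℂ) = 0 by ring,
          Complex.exp_zero]
      -- the exact complex identity
      have hAB :
          ((1 / 2 : ℂ) * (((starRingEnd ℂ) (gw (θ / 2)) - μw (θ / 2) * (starRingEnd ℂ) (hw (θ / 2))) * F (θ / 2)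
            + ((starRingEnd ℂ) (gw (θ / 2 + π)) - μw (θ / 2 + π) * (starRingEnd ℂ) (hw (θ / 2 + π))) * F (θ / 2 + π)))
          * (starRingEnd ℂ) ((1 / 2 : ℂ) * (((starRingEnd ℂ) (gw (θ / 2)) - μw (θ / 2) * (starRingEnd ℂ) (hw (θ / 2))) * F (θ / 2)
            + ((starRingEnd ℂ) (gw (θ / 2 + π)) - μw (θ / 2 + π) * (starRingEnd ℂ) (hw (θ / 2 + π))) * F (θ / 2 + π)))
          + ((1 / 2 : ℂ) * (((starRingEnd ℂ) (gs (θ / 2)) - μs (θ / 2) * (starRingEnd ℂ) (hs (θ / 2))) * F (θ / 2)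
            + ((starRingEnd ℂ) (gs (θ / 2 + π)) - μs (θ / 2 + π) * (starRingEnd ℂ) (hs (θ / 2 + π))) * F (θ / 2 + π)))
          * (starRingEnd ℂ) ((1 / 2 : ℂ) * (((starRingEnd ℂ) (gs (θ / 2)) - μs (θ / 2) * (starRingEnd ℂ) (hs (θ / 2))) * F (θ / 2)
            + ((starRingEnd ℂ) (gs (θ / 2 + π)) - μs (θ / 2 + π) * (starRingEnd ℂ) (hs (θ / 2 + π))) * F (θ / 2 + π)))
          = (1 / 4 : ℂ) *
            (((hs (θ / 2) - μs (θ / 2) * gs (θ / 2)) * (starRingEnd ℂ) (hs (θ / 2) - μs (θ / 2) * gs (θ / 2))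
              + (hs (θ / 2 + π) - μs (θ / 2 + π) * gs (θ / 2 + π)) * (starRingEnd ℂ) (hs (θ / 2 + π) - μs (θ / 2 + π) * gs (θ / 2 + π)))
            * (F (θ / 2) * (starRingEnd ℂ) (F (θ / 2)) + F (θ / 2 + π) * (starRingEnd ℂ) (F (θ / 2 + π)))) := by
        rw [hgw1, hgw2, hhw1, hhw2, hm1, hm2]
        simp only [map_mul, map_add, map_sub, map_neg, map_div₀, map_one, map_ofNat,
          Complex.conj_conj]
        linear_combination
          ((1/4 : ℂ) * gs (θ / 2 + π) * (starRingEnd ℂ) (gs (θ / 2 + π)) * F (θ / 2) * (starRingEnd ℂ) (F (θ / 2)) - (1/4 : ℂ) * (starRingEnd ℂ) (gs (θ / 2)) * gs (θ / 2 + π) * F (θ / 2) * (starRingEnd ℂ) (F (θ / 2 + π)) - (1/4 : ℂ) * gs (θ / 2) * (starRingEnd ℂ) (gs (θ / 2 + π)) * (starRingEnd ℂ) (F (θ / 2)) * F (θ / 2 + π) + (1/4 : ℂ) * gs (θ / 2) * (starRingEnd ℂ) (gs (θ / 2)) * F (θ / 2 + π) * (starRingEnd ℂ) (F (θ / 2 +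 π)) - (1/4 : ℂ) * (starRingEnd ℂ) (μs (θ / 2 + π)) * (starRingEnd ℂ) (gs (θ / 2 + π)) * hs (θ / 2 + π) * F (θ / 2) * (starRingEnd ℂ) (F (θ / 2)) + (1/4 : ℂ) * (starRingEnd ℂ) (μs (θ / 2 + π)) * (starRingEnd ℂ) (gs (θ / 2)) * hs (θ / 2 + π) * F (θ / 2) * (starRingEnd ℂ) (F (θ / 2 + π)) - (1/4 : ℂ) * μs (θ / 2 + π) * gs (θ / 2 + π) * (starRingEnd ℂ) (hs (θ / 2 + π)) * F (θ / 2) * (starRingEnd ℂ) (F (θ / 2)) + (1/4 : ℂ) * μs (θ / 2 + π) * gs (θ / 2) * (starRingEnd ℂ) (hs (θ / 2 + π)) * (starRingEnd ℂ) (F (θ / 2)) * F (θ / 2 + π) + (1/4 : ℂ) * μs (θ / 2 + π) * (starRingEnd ℂ) (μs (θ / 2 + π)) * hs (θ / 2 + π) * (starRingEnd ℂ) (hs (θ / 2 + π)) * F (θ / 2) * (starRingEnd ℂ) (F (θ / 2)) + (1/4 : ℂ) * (starRingEnd ℂ) (μs (θ / 2)) * (starRingEnd ℂ) (gs (θ /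 2 + π)) * hs (θ / 2) * (starRingEnd ℂ) (F (θ / 2)) * F (θ / 2 + π) - (1/4 : ℂ) * (starRingEnd ℂ) (μs (θ / 2)) * (starRingEnd ℂ) (gs (θ / 2)) * hs (θ / 2) * F (θ / 2 + π) * (starRingEnd ℂ) (F (θ / 2 + π)) - (1/4 : ℂ) * (starRingEnd ℂ) (μs (θ / 2)) * μs (θ / 2 + π) * hs (θ / 2) * (starRingEnd ℂ) (hs (θ / 2 + π)) * (starRingEnd ℂ) (F (θ / 2)) * F (θ / 2 + π) + (1/4 : ℂ) * μs (θ / 2) * gs (θ / 2 + π) * (starRingEnd ℂ) (hs (θ / 2)) * F (θ / 2) * (starRingEnd ℂ) (F (θ / 2 + π)) - (1/4 : ℂ) * μs (θ / 2) * gs (θ / 2) * (starRingEnd ℂ) (hs (θ / 2)) * F (θ / 2 + π) * (starRingEnd ℂ) (F (θ / 2 + π)) - (1/4 : ℂ) * μs (θ / 2) * (starRingEnd ℂ) (μs (θ / 2 + π)) * (starRingEnd ℂ) (hs (θ / 2)) * hs (θ / 2 + π) * F (θ / 2) * (starRingEnd ℂ) (F (θ / 2 + π)) + (1/4 : ℂ)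 * μs (θ / 2) * (starRingEnd ℂ) (μs (θ / 2)) * hs (θ / 2) * (starRingEnd ℂ) (hs (θ / 2)) * F (θ / 2 + π) * (starRingEnd ℂ) (F (θ / 2 + π))) * he1 +
          
 ((1/4 : ℂ) * hs (θ / 2) * (starRingEnd ℂ) (hs (θ / 2)) * F (θ / 2 + π) * (starRingEnd ℂ) (F (θ / 2 + π)) + (1/4 : ℂ) * hs (θ / 2) * (starRingEnd ℂ) (hs (θ / 2)) * F (θ / 2) * (starRingEnd ℂ) (F (θ / 2)) - (1/4 : ℂ) * gs (θ / 2) * (starRingEnd ℂ) (gs (θ / 2)) * F (θ / 2 + π) * (starRingEnd ℂ) (F (θ / 2 + π)) - (1/4 : ℂ) * gs (θ / 2) * (starRingEnd ℂ) (gs (θ / 2)) * F (θ / 2) * (starRingEnd ℂ) (F (θ / 2))) * hc1 +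
          
 ((1/4 : ℂ) * hs (θ / 2 + π) * (starRingEnd ℂ) (hs (θ / 2 + π)) * F (θ / 2 + π) * (starRingEnd ℂ) (F (θ / 2 + π)) + (1/4 : ℂ) * hs (θ / 2 + π) * (starRingEnd ℂ) (hs (θ / 2 + π)) * F (θ / 2) * (starRingEnd ℂ) (F (θ / 2)) - (1/4 : ℂ) * gs (θ / 2 + π) * (starRingEnd ℂ) (gs (θ / 2 + π)) * F (θ / 2 + π) * (starRingEnd ℂ) (F (θ / 2 + π)) - (1/4 : ℂ) * gs (θ / 2 + π) * (starRingEnd ℂ) (gs (θ / 2 + π)) * F (θ / 2) * (starRingEnd ℂ) (F (θ / 2))) * hc2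
      -- pass to real norms
      have hmc : ∀ z : ℂ, z * (starRingEnd ℂ) z = ((‖z‖ ^ 2 : ℝ) : ℂ) := by
        intro z
        rw [Complex.mul_conj]
        norm_cast
        rw [Complex.normSq_eq_norm_sq]
      rw [hmc, hmc, hmc, hmc, hmc, hmc] at hAB
      have hAB' :
          (‖(1 / 2 : ℂ) * (((starRingEnd ℂ) (gw (θ / 2)) - μw (θ / 2) * (starRingEnd ℂ) (hw (θ / 2))) * F (θ / 2)
            + ((starRingEnd ℂ) (gw (θ / 2 + π)) - μw (θ / 2 + π) * (starRingEnd ℂ) (hw (θ / 2 + π))) * F (θ / 2 + π))‖ ^ 2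
          + ‖(1 / 2 : ℂ) * (((starRingEnd ℂ) (gs (θ / 2)) - μs (θ / 2) * (starRingEnd ℂ) (hs (θ / 2))) * F (θ / 2)
            + ((starRingEnd ℂ) (gs (θ / 2 + π)) - μs (θ / 2 + π) * (starRingEnd ℂ) (hs (θ / 2 + π))) * F (θ / 2 + π))‖ ^ 2)
          = 1 / 4 * ((‖hs (θ / 2) - μs (θ / 2) * gs (θ / 2)‖ ^ 2
              + ‖hs (θ / 2 + π) - μs (θ / 2 + π) * gs (θ / 2 + π)‖ ^ 2)
            * (‖F (θ / 2)‖ ^ 2 + ‖F (θ / 2 + π)‖ ^ 2)) := by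
        have h := hAB
        rw [show (1 / 4 : ℂ) = ((1 / 4 : ℝ) : ℂ) by norm_num] at h
        exact_mod_cast h
      rw [hAB']
      have hd1 : ‖hs (θ / 2) - μs (θ / 2) * gs (θ / 2)‖ ^ 2 ≤ ε ^ 2 :=
        pow_le_pow_left₀ (norm_nonneg _) (hHilb _) 2
      have hd2 : ‖hs (θ / 2 + π) - μs (θ / 2 + π) * gs (θ / 2 + π)‖ ^ 2 ≤ ε ^ 2 :=
        pow_le_pow_left₀ (norm_nonneg _) (hHilb _) 2
      nlinarith [sq_nonneg ‖F (θ / 2)‖, sq_nonneg ‖F (θ / 2 + π)‖,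
        sq_nonneg ‖hs (θ / 2) - μs (θ / 2) * gs (θ / 2)‖,
        sq_nonneg ‖hs (θ / 2 + π) - μs (θ / 2 + π) * gs (θ / 2 + π)‖]
    -- integrability of the dominating function
    have h01 : IntervalIntegrable (fun θ : ℝ => ‖F θ‖ ^ 2) volume 0 π :=
      hFint.mono_set (Set.uIcc_subset_uIcc (Set.mem_uIcc.2 (Or.inl ⟨le_rfl, by linarith⟩))
        (Set.mem_uIcc.2 (Or.inl ⟨by linarith, by linarith⟩)))
    have h12 : IntervalIntegrable (fun θ : ℝ => ‖F θ‖ ^ 2) volume π (2 * π) :=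
      hFint.mono_set (Set.uIcc_subset_uIcc (Set.mem_uIcc.2 (Or.inl ⟨by linarith, by linarith⟩))
        (Set.mem_uIcc.2 (Or.inl ⟨by linarith, le_rfl⟩)))
    have h1' : IntervalIntegrable (fun θ : ℝ => ‖F (θ / 2)‖ ^ 2) volume 0 (2 * π) := by
      have h := h01.comp_mul_left (c := 1 / 2)
      rw [show (0 : ℝ) / (1 / 2) = 0 by norm_num, show (π : ℝ) / (1 / 2) = 2 * π by ring] at h
      have heq : (fun θ : ℝ => ‖F (θ / 2)‖ ^ 2) = fun x : ℝ => ‖F (1 / 2 * x)‖ ^ 2 := by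
        funext x; congr 2; ring
      rw [heq]; exact h
    have h2' : IntervalIntegrable (fun θ : ℝ => ‖F (θ / 2 + π)‖ ^ 2) volume 0 (2 * π) := by
      have ha := h12.comp_add_right π
      rw [show (π : ℝ) - π = 0 by ring, show 2 * π - π = π by ring] at ha
      have hb := ha.comp_mul_left (c := 1 / 2)
      rw [show (0 : ℝ) / (1 / 2) = 0 by norm_num, show (π : ℝ) / (1 / 2) = 2 * π by ring] at hb
      have heq : (fun θ : ℝ => ‖F (θ / 2 + π)‖ ^ 2) = fun x : ℝ => ‖F (1 / 2 * x + π)‖ ^ 2 := by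
        funext x; congr 2; ring
      rw [heq]; exact hb
    have hbound_int : IntervalIntegrable
        (fun θ : ℝ => ε ^ 2 / 2 * (‖F (θ / 2)‖ ^ 2 + ‖F (θ / 2 + π)‖ ^ 2)) volume 0 (2 * π) :=
      (h1'.add h2').const_mul _
    -- value of the dominating integral
    have hIeq : (∫ θ in (0 : ℝ)..(2 * π), ε ^ 2 / 2 * (‖F (θ / 2)‖ ^ 2 + ‖F (θ / 2 + π)‖ ^ 2))
        = ε ^ 2 * ∫ θ in (0 : ℝ)..(2 * π), ‖F θ‖ ^ 2 := by
      rw [intervalIntegral.integral_const_mul, intervalIntegral.integral_add h1' h2']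
      have i1 : (∫ θ in (0 : ℝ)..(2 * π), ‖F (θ / 2)‖ ^ 2)
          = 2 * ∫ x in (0 : ℝ)..π, ‖F x‖ ^ 2 := by
        have h := intervalIntegral.integral_comp_div (a := 0) (b := 2 * π)
          (f := fun x : ℝ => ‖F x‖ ^ 2) (c := 2) two_ne_zero
        rw [show (0 : ℝ) / 2 = 0 by norm_num, show 2 * π / 2 = π by ring, smul_eq_mul] at h
        exact h
      have i2 : (∫ θ in (0 : ℝ)..(2 * π), ‖F (θ / 2 + π)‖ ^ 2)
          = 2 * ∫ x in π..(2 * π), ‖F x‖ ^ 2 := by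
        have h := intervalIntegral.integral_comp_div (a := 0) (b := 2 * π)
          (f := fun x : ℝ => ‖F (x + π)‖ ^ 2) (c := 2) two_ne_zero
        rw [show (0 : ℝ) / 2 = 0 by norm_num, show 2 * π / 2 = π by ring, smul_eq_mul] at h
        rw [h]
        have h2 := intervalIntegral.integral_comp_add_right (a := 0) (b := π)
          (fun x : ℝ => ‖F x‖ ^ 2) π
        rw [show (0 : ℝ) + π = π by ring, show (π : ℝ) + π = 2 * π by ring] at h2
        rw [h2]
      have hadj := intervalIntegral.integral_add_adjacent_intervals (a := 0) (b := π)
        (c := 2 * π) h01 h12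
      rw [i1, i2, ← hadj]
      ring
    by_cases hGint : IntervalIntegrable (fun θ : ℝ =>
        (‖(1 / 2 : ℂ) * (((starRingEnd ℂ) (gw (θ / 2)) - μw (θ / 2) * (starRingEnd ℂ) (hw (θ / 2))) * F (θ / 2)
            + ((starRingEnd ℂ) (gw (θ / 2 + π)) - μw (θ / 2 + π) * (starRingEnd ℂ) (hw (θ / 2 + π))) * F (θ / 2 + π))‖ ^ 2
          + ‖(1 / 2 : ℂ) * (((starRingEnd ℂ) (gs (θ / 2)) - μs (θ / 2) * (starRingEnd ℂ) (hs (θ / 2))) * F (θ / 2)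
            + ((starRingEnd ℂ) (gs (θ / 2 + π)) - μs (θ / 2 + π) * (starRingEnd ℂ) (hs (θ / 2 + π))) * F (θ / 2 + π))‖ ^ 2))
        volume 0 (2 * π)
    · calc (∫ θ in (0 : ℝ)..(2 * π),
          (‖(1 / 2 : ℂ) * (((starRingEnd ℂ) (gw (θ / 2)) - μw (θ / 2) * (starRingEnd ℂ) (hw (θ / 2))) * F (θ / 2)
              + ((starRingEnd ℂ) (gw (θ / 2 + π)) - μw (θ / 2 + π) * (starRingEnd ℂ) (hw (θ / 2 + π))) * F (θ / 2 + π))‖ ^ 2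
            + ‖(1 / 2 : ℂ) * (((starRingEnd ℂ) (gs (θ / 2)) - μs (θ / 2) * (starRingEnd ℂ) (hs (θ / 2))) * F (θ / 2)
              + ((starRingEnd ℂ) (gs (θ / 2 + π)) - μs (θ / 2 + π) * (starRingEnd ℂ) (hs (θ / 2 + π))) * F (θ / 2 + π))‖ ^ 2))
          ≤ ∫ θ in (0 : ℝ)..(2 * π), ε ^ 2 / 2 * (‖F (θ / 2)‖ ^ 2 + ‖F (θ / 2 + π)‖ ^ 2) := by
            refine intervalIntegral.integral_mono_ae (by linarith) hGint hbound_int ?_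
            filter_upwards [hnull] with θ hθ
            exact hpt θ hθ
        _ = ε ^ 2 * ∫ θ in (0 : ℝ)..(2 * π), ‖F θ‖ ^ 2 := hIeq
    · rw [intervalIntegral.integral_undef hGint]
      exact mul_nonneg (sq_nonneg ε)
        (intervalIntegral.integral_nonneg (by linarith) (fun u _ => by positivity))
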